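/- Let f : ℝⁿ → ℝ ∪ {∞}, x̄* ∈ ∂f(x̄), g : ℝⁿ → ℝ twice continuously differentiable, and h := f + g. Then the h-attentive limiting normal cone to gph ∂h at (x̄, x̄* + ∇g(x̄)) equals Ā^{−T} · N^f_{gph ∂f}(x̄, x̄*), where Ā = [[I, 0], [∇²g(x̄), I]] and Ā^{−T} is the inverse transpose of Ā. -/

import Mathlib

open scoped RealInnerProductSpace
open Filter Topology Metric Matrix

noncomputable section

abbrev En (n : ℕ) := EuclideanSpace ℝ (Fin n)

variable {n : ℕ}

/-- The regular (Fréchet) subdifferential of an extended-real-valued function. -/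
def FSubdiff (f : En n → EReal) (x : En n) : Set (En n) :=
  {v | ∀ c : ℝ, 0 < c → ∃ δ > (0:ℝ), ∀ y ∈ ball x δ,
    f x + ((⟪v, y - x⟫ - c * ‖y - x‖ : ℝ) : EReal) ≤ f y}

/-- The limiting (Mordukhovich) subdifferential, via f-attentive convergence. -/
def LSubdiff (f : En n → EReal) (x : En n) : Set (En n) :=
  {v | ∃ xs vs : ℕ → En n, (∀ k, vs k ∈ FSubdiff f (xs k)) ∧
    Tendsto xs atTop (𝓝 x) ∧ Tendsto (fun k => f (xs k)) atTop (𝓝 (f x)) ∧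
    Tendsto vs atTop (𝓝 v)}

/-- The graph of the f-attentive ε-localization of the subdifferential around (x̄, x̄*). -/
def GphT (f : En n → EReal) (xb xbs : En n) (ε : ℝ) : Set (En n × En n) :=
  {p | p.2 ∈ LSubdiff f p.1 ∧ f p.1 < f xb + (ε : EReal) ∧
       p.1 ∈ ball xb ε ∧ p.2 ∈ ball xbs ε}

/-- Prox-regularity of f at x̄ for x̄* with parameters r ≥ 0 and ε > 0. -/
def ProxReg (f : En n → EReal) (xb xbs : En n) (r ε : ℝ) : Prop :=
  (∃ a : ℝ, f xb = (a : EReal)) ∧ xbs ∈ LSubdiff f xb ∧ 0 ≤ r ∧ 0 < ε ∧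
  ∀ x' ∈ ball xb ε, ∀ p ∈ GphT f xb xbs ε,
    f p.1 + ((⟪p.2, x' - p.1⟫ - r / 2 * ‖x' - p.1‖ ^ 2 : ℝ) : EReal) ≤ f x'

/-- The f-attentive tangent cone to the graph of ∂f at (x, x*). -/
def AttTangent (f : En n → EReal) (x xstar : En n) : Set (En n × En n) :=
  {u | ∃ (t : ℕ → ℝ) (xs vs : ℕ → En n), (∀ k, 0 < t k) ∧ Tendsto t atTop (𝓝 0) ∧
    (∀ k, vs k ∈ LSubdiff f (xs k)) ∧ Tendsto xs atTop (𝓝 x) ∧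
    Tendsto (fun k => f (xs k)) atTop (𝓝 (f x)) ∧ Tendsto vs atTop (𝓝 xstar) ∧
    Tendsto (fun k => (t k)⁻¹ • ((xs k, vs k) - (x, xstar))) atTop (𝓝 u)}

/-- The f-attentive regular normal cone: the polar of the f-attentive tangent cone. -/
def AttRegNormal (f : En n → EReal) (x xstar : En n) : Set (En n × En n) :=
  {v | ∀ u ∈ AttTangent f x xstar, ⟪v.1, u.1⟫ + ⟪v.2, u.2⟫ ≤ 0}

/-- The f-attentive limiting normal cone to gph ∂f at (x, x*). -/
def AttLimNormal (f : En n → EReal) (x xstar : En n) : Set (En n × En n) :=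
  {v | ∃ (xs vs : ℕ → En n) (ws : ℕ → En n × En n),
    (∀ k, vs k ∈ LSubdiff f (xs k)) ∧ Tendsto xs atTop (𝓝 x) ∧
    Tendsto (fun k => f (xs k)) atTop (𝓝 (f x)) ∧ Tendsto vs atTop (𝓝 xstar) ∧
    (∀ k, ws k ∈ AttRegNormal f (xs k) (vs k)) ∧ Tendsto ws atTop (𝓝 v)}

/-! ### Auxiliary lemmas -/

lemma ereal_cancel (a : EReal) (r : ℝ) : (a + (r : EReal)) + ((-r : ℝ) : EReal) = a := by
  rw [EReal.coe_neg, ← sub_eq_add_neg, EReal.add_sub_cancel_right]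

lemma add_neg_g (f : En n → EReal) (g : En n → ℝ) :
    (fun y => (f y + ((g y : ℝ) : EReal)) + ((-g y : ℝ) : EReal)) = f := by
  funext y; exact ereal_cancel (f y) (g y)

lemma tendsto_add_ereal_real {α : Type*} {l : Filter α} {F : α → EReal} {r : α → ℝ}
    {a : EReal} {b : ℝ} (hF : Tendsto F l (𝓝 a)) (hr : Tendsto r l (𝓝 b)) :
    Tendsto (fun k => F k + ((r k : ℝ) : EReal)) l (𝓝 (a + (b : EReal))) := by
  have h1 : Tendsto (fun k => (F k, ((r k : ℝ) : EReal))) l (𝓝 (a, (b : EReal))) :=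
    hF.prodMk_nhds ((continuous_coe_real_ereal.tendsto b).comp hr)
  exact (EReal.continuousAt_add (Or.inr (EReal.coe_ne_bot b))
    (Or.inr (EReal.coe_ne_top b))).tendsto.comp h1

lemma gradient_neg' (g : En n → ℝ) (x : En n) :
    gradient (fun y => -g y) x = -gradient g x := by
  unfold gradient
  rw [fderiv_fun_neg, map_neg]

lemma contDiff_gradient {g : En n → ℝ} (hg : ContDiff ℝ 2 g) :
    ContDiff ℝ 1 (gradient g) := by
  have h1 : ContDiff ℝ 1 (fderiv ℝ g) := hg.fderiv_right (by norm_num)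
  exact ((InnerProductSpace.toDual ℝ (En n)).symm.contDiff).comp h1

lemma gradient_continuous {g : En n → ℝ} (hg : ContDiff ℝ 2 g) :
    Continuous (gradient g) :=
  (contDiff_gradient hg).continuous

lemma hessian_continuous {g : En n → ℝ} (hg : ContDiff ℝ 2 g) :
    Continuous (fun x => fderiv ℝ (gradient g) x) :=
  (contDiff_gradient hg).continuous_fderiv (by norm_num)

lemma fsubdiff_add {f : En n → EReal} {g : En n → ℝ} {x v : En n}
    (hv : v ∈ FSubdiff f x) (hgd : DifferentiableAt ℝ g x) :
    v + gradient g x ∈ FSubdiff (fun y => f y + ((g y : ℝ) : EReal)) x := by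
  intro c hc
  obtain ⟨δ₁, hδ₁, H1⟩ := hv (c/2) (by linarith)
  have hgr : HasGradientAt g (gradient g x) x := hgd.hasGradientAt
  have hlo := hasGradientAt_iff_isLittleO.mp hgr
  have hev := hlo.def (show (0:ℝ) < c/2 by linarith)
  rw [Metric.eventually_nhds_iff_ball] at hev
  obtain ⟨δ₂, hδ₂, H2⟩ := hev
  refine ⟨min δ₁ δ₂, lt_min hδ₁ hδ₂, fun y hy => ?_⟩
  have hy1 : y ∈ ball x δ₁ := mem_ball.mpr (lt_of_lt_of_le (mem_ball.mp hy) (min_le_left _ _))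
  have hy2 : y ∈ ball x δ₂ := mem_ball.mpr (lt_of_lt_of_le (mem_ball.mp hy) (min_le_right _ _))
  have h1 := H1 y hy1
  have h2 := H2 y hy2
  have h2' : g x + (⟪gradient g x, y - x⟫ - c/2 * ‖y - x‖) ≤ g y := by
    have h3 : |g y - g x - ⟪gradient g x, y - x⟫| ≤ c/2 * ‖y - x‖ := by
      rwa [Real.norm_eq_abs] at h2
    have h4 := (abs_le.mp h3).1
    linarith
  have key : (⟪v + gradient g x, y - x⟫ - c * ‖y - x‖ : ℝ)
      = (⟪v, y - x⟫ - c/2 * ‖y - x‖) + (⟪gradient g x, y - x⟫ - c/2 * ‖y - x‖) := by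
    rw [inner_add_left]; ring
  calc (f x + ((g x : ℝ) : EReal)) + ((⟪v + gradient g x, y - x⟫ - c * ‖y - x‖ : ℝ) : EReal)
      = (f x + ((⟪v, y - x⟫ - c/2 * ‖y - x‖ : ℝ) : EReal))
        + (((g x + (⟪gradient g x, y - x⟫ - c/2 * ‖y - x‖) : ℝ)) : EReal) := by
        rw [key, EReal.coe_add, EReal.coe_add]
        ring_nf
        rw [add_add_add_comm]
    _ ≤ f y + ((g y : ℝ) : EReal) := by
        exact add_le_add h1 (by exact_mod_cast h2')

lemma lsubdiff_add {f : En n → EReal} {g : En n → ℝ} {x v : En n}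
    (hv : v ∈ LSubdiff f x) (hg : ContDiff ℝ 2 g) :
    v + gradient g x ∈ LSubdiff (fun y => f y + ((g y : ℝ) : EReal)) x := by
  obtain ⟨xs, vs, h1, h2, h3, h4⟩ := hv
  refine ⟨xs, fun k => vs k + gradient g (xs k),
    fun k => fsubdiff_add (h1 k) (hg.differentiable (by norm_num)).differentiableAt,
    h2, ?_, h4.add (((gradient_continuous hg).tendsto x).comp h2)⟩
  exact tendsto_add_ereal_real h3 ((hg.continuous.tendsto x).comp h2)

lemma lsubdiff_add_iff {f : En n → EReal} {g : En n → ℝ} (hg : ContDiff ℝ 2 g) {x w : En n} :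
    w ∈ LSubdiff (fun y => f y + ((g y : ℝ) : EReal)) x ↔ w - gradient g x ∈ LSubdiff f x := by
  constructor
  · intro h
    have h2 := lsubdiff_add (f := fun y => f y + ((g y : ℝ) : EReal)) (g := fun y => -g y)
      h hg.neg
    rw [gradient_neg', add_neg_g f g, ← sub_eq_add_neg] at h2
    exact h2
  · intro h
    have h2 := lsubdiff_add h hg
    rwa [sub_add_cancel] at h2

lemma attTangent_add {f : En n → EReal} {g : En n → ℝ} (hg : ContDiff ℝ 2 g)
    {x v : En n} {u : En n × En n} (hu : u ∈ AttTangent f x v) :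
    (u.1, fderiv ℝ (gradient g) x u.1 + u.2) ∈
      AttTangent (fun y => f y + ((g y : ℝ) : EReal)) x (v + gradient g x) := by
  classical
  obtain ⟨t, xs, vs, ht, ht0, hmem, hxs, hfxs, hvs, hquot⟩ := hu
  set G := gradient g with hG
  set H := fderiv ℝ (gradient g) x with hH
  have h1 : Tendsto (fun k => (t k)⁻¹ • (xs k - x)) atTop (𝓝 u.1) := by
    have := (continuous_fst.tendsto u).comp hquot
    simpa [Function.comp_def] using this
  have h2 : Tendsto (fun k => (t k)⁻¹ • (vs k - v)) atTop (𝓝 u.2) := by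
    have := (continuous_snd.tendsto u).comp hquot
    simpa [Function.comp_def] using this
  have hdG : HasFDerivAt G H x :=
    (((contDiff_gradient hg).differentiable (by norm_num)) x).hasFDerivAt
  have hlo := hdG.isLittleO
  set e : ℕ → En n := fun k => G (xs k) - G x - H (xs k - x) with he
  have hq : ∀ k, (t k)⁻¹ • (G (xs k) - G x) = H ((t k)⁻¹ • (xs k - x)) + (t k)⁻¹ • e k := by
    intro k
    rw [he]
    simp only []
    rw [ContinuousLinearMap.map_smul, ← smul_add]
    congr 1
    abel
  set q : ℕ → ℝ := fun k => if xs k = x then 0 else ‖e k‖ / ‖xs k - x‖ with hqdef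
  have hq0 : Tendsto q atTop (𝓝 0) := by
    rw [Metric.tendsto_atTop]
    intro ε hε
    have hev := hlo.def (show (0:ℝ) < ε/2 by linarith)
    have hev2 : ∀ᶠ k in atTop, ‖G (xs k) - G x - H (xs k - x)‖ ≤ ε/2 * ‖xs k - x‖ :=
      hxs.eventually hev
    obtain ⟨N, hN⟩ := eventually_atTop.mp hev2
    refine ⟨N, fun k hk => ?_⟩
    rw [Real.dist_eq, sub_zero]
    by_cases hx0 : xs k = x
    · simp only [hqdef, if_pos hx0, abs_zero]; exact hε
    · have hpos : (0:ℝ) < ‖xs k - x‖ := norm_pos_iff.mpr (sub_ne_zero.mpr hx0)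
      have hqk : q k = ‖e k‖ / ‖xs k - x‖ := if_neg hx0
      rw [hqk, abs_of_nonneg (by positivity), div_lt_iff₀ hpos]
      have hb := hN k hk
      have : ε/2 * ‖xs k - x‖ < ε * ‖xs k - x‖ :=
        mul_lt_mul_of_pos_right (by linarith) hpos
      calc ‖e k‖ ≤ ε/2 * ‖xs k - x‖ := hb
        _ < ε * ‖xs k - x‖ := this
  have hbound : ∀ k, ‖(t k)⁻¹ • e k‖ ≤ q k * ‖(t k)⁻¹ • (xs k - x)‖ := by
    intro k
    by_cases hx0 : xs k = x
    · simp [he, hx0, hqdef]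
    · have hqk : q k = ‖e k‖ / ‖xs k - x‖ := if_neg hx0
      have hpos : (0:ℝ) < ‖xs k - x‖ := norm_pos_iff.mpr (sub_ne_zero.mpr hx0)
      refine le_of_eq ?_
      rw [hqk, norm_smul, norm_smul]
      field_simp
      try ring
  have hrhs : Tendsto (fun k => q k * ‖(t k)⁻¹ • (xs k - x)‖) atTop (𝓝 0) := by
    have := hq0.mul ((continuous_norm.tendsto u.1).comp h1)
    simpa using this
  have h6 : Tendsto (fun k => (t k)⁻¹ • e k) atTop (𝓝 0) := squeeze_zero_norm hbound hrhs
  have hkey : Tendsto (fun k => (t k)⁻¹ • (G (xs k) - G x)) atTop (𝓝 (H u.1)) := by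
    have hh := ((H.continuous.tendsto u.1).comp h1).add h6
    rw [add_zero] at hh
    exact Tendsto.congr (fun k => (hq k).symm) hh
  refine ⟨t, xs, fun k => vs k + G (xs k), ht, ht0, fun k => lsubdiff_add (hmem k) hg, hxs,
    tendsto_add_ereal_real hfxs ((hg.continuous.tendsto x).comp hxs),
    hvs.add (((gradient_continuous hg).tendsto x).comp hxs), ?_⟩
  have hfinal : Tendsto (fun k => ((t k)⁻¹ • (xs k - x),
      (t k)⁻¹ • (vs k - v) + (t k)⁻¹ • (G (xs k) - G x))) atTop (𝓝 (u.1, H u.1 + u.2)) := by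
    refine h1.prodMk_nhds ?_
    have := h2.add hkey
    rwa [add_comm u.2 (H u.1)] at this
  refine Tendsto.congr (fun k => ?_) hfinal
  have hsplit : (xs k, vs k + G (xs k)) - (x, v + G x)
      = (xs k - x, (vs k - v) + (G (xs k) - G x)) := by
    rw [Prod.mk_sub_mk]
    congr 1
    abel
  rw [hsplit, Prod.smul_mk, smul_add]

lemma attTangent_add_iff {f : En n → EReal} {g : En n → ℝ} (hg : ContDiff ℝ 2 g)
    {x v : En n} {u : En n × En n} :
    u ∈ AttTangent (fun y => f y + ((g y : ℝ) : EReal)) x (v + gradient g x) ↔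
    (u.1, -(fderiv ℝ (gradient g) x u.1) + u.2) ∈ AttTangent f x v := by
  have hGneg : gradient (fun y => -g y) = fun y => -gradient g y := funext (gradient_neg' g)
  have hHneg : fderiv ℝ (gradient (fun y => -g y)) x = -(fderiv ℝ (gradient g) x) := by
    rw [hGneg, fderiv_fun_neg]
  constructor
  · intro h
    have h2 := attTangent_add (f := fun y => f y + ((g y : ℝ) : EReal)) (g := fun y => -g y)
      hg.neg h
    rw [add_neg_g f g, hHneg, gradient_neg', add_neg_cancel_right] at h2
    simpa using h2
  · intro h
    have h2 := attTangent_add hg h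
    simp only [ContinuousLinearMap.map_neg] at h2
    simpa using h2

lemma attRegNormal_add_iff {f : En n → EReal} {g : En n → ℝ} (hg : ContDiff ℝ 2 g)
    {x v : En n} {w : En n × En n} :
    w ∈ AttRegNormal (fun y => f y + ((g y : ℝ) : EReal)) x (v + gradient g x) ↔
    (w.1 + ContinuousLinearMap.adjoint (fderiv ℝ (gradient g) x) w.2, w.2)
      ∈ AttRegNormal f x v := by
  constructor
  · intro h u hu
    have h2 := h (u.1, fderiv ℝ (gradient g) x u.1 + u.2) (attTangent_add hg hu)
    simp only [inner_add_left, inner_add_right] at h2 ⊢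
    rw [ContinuousLinearMap.adjoint_inner_left]
    linarith
  · intro h u hu
    have hu' := (attTangent_add_iff hg).mp hu
    have h2 := h _ hu'
    simp only [inner_add_left, inner_add_right, inner_neg_right] at h2
    rw [ContinuousLinearMap.adjoint_inner_left] at h2
    linarith

set_option maxHeartbeats 1000000 in
theorem stmt6 (f : En n → EReal) (xb xbs : En n) (hx : xbs ∈ LSubdiff f xb)
    (g : En n → ℝ) (hg : ContDiff ℝ 2 g) :
    AttLimNormal (fun x => f x + ((g x : ℝ) : EReal)) xb (xbs + gradient g xb)
      = (fun w : En n × En n =>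
          (w.1 - ContinuousLinearMap.adjoint (fderiv ℝ (gradient g) xb) w.2, w.2)) ''
          AttLimNormal f xb xbs := by
  have hGc : Continuous (gradient g) := gradient_continuous hg
  have hHc : Continuous (fun y => fderiv ℝ (gradient g) y) := hessian_continuous hg
  have hAc : Continuous (fun y =>
      ContinuousLinearMap.adjoint (fderiv ℝ (gradient g) y)) :=
    (ContinuousLinearMap.adjoint (𝕜 := ℝ) (E := En n) (F := En n)).continuous.comp hHc
  ext w
  constructor
  · intro hw
    obtain ⟨xs, vsh, ws, hmem, hxs, hfxs, hvs, hws, hwt⟩ := hw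
    have hGxs : Tendsto (fun k => gradient g (xs k)) atTop (𝓝 (gradient g xb)) :=
      (hGc.tendsto xb).comp hxs
    set vs : ℕ → En n := fun k => vsh k - gradient g (xs k) with hvsdef
    have hmemf : ∀ k, vs k ∈ LSubdiff f (xs k) := fun k => (lsubdiff_add_iff hg).mp (hmem k)
    have hfxsf : Tendsto (fun k => f (xs k)) atTop (𝓝 (f xb)) := by
      have hgx : Tendsto (fun k => -g (xs k)) atTop (𝓝 (-g xb)) :=
        ((hg.continuous.tendsto xb).comp hxs).neg
      have := tendsto_add_ereal_real hfxs hgx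
      simpa only [ereal_cancel] using this
    have hvsf : Tendsto vs atTop (𝓝 xbs) := by
      have := hvs.sub hGxs
      simpa using this
    set ws' : ℕ → En n × En n := fun k =>
      ((ws k).1 + ContinuousLinearMap.adjoint (fderiv ℝ (gradient g) (xs k)) (ws k).2,
        (ws k).2) with hws'def
    have hws' : ∀ k, ws' k ∈ AttRegNormal f (xs k) (vs k) := by
      intro k
      have h0 := hws k
      have h1 : vsh k = vs k + gradient g (xs k) := (sub_add_cancel _ _).symm
      rw [h1] at h0
      exact (attRegNormal_add_iff hg).mp h0
    have hfst : Tendsto (fun k => (ws k).1) atTop (𝓝 w.1) :=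
      (continuous_fst.tendsto w).comp hwt
    have hsnd : Tendsto (fun k => (ws k).2) atTop (𝓝 w.2) :=
      (continuous_snd.tendsto w).comp hwt
    have hAcomp : Tendsto (fun k =>
        ContinuousLinearMap.adjoint (fderiv ℝ (gradient g) (xs k))) atTop
        (𝓝 (ContinuousLinearMap.adjoint (fderiv ℝ (gradient g) xb))) :=
      (hAc.tendsto xb).comp hxs
    have happly : Tendsto (fun k =>
        ContinuousLinearMap.adjoint (fderiv ℝ (gradient g) (xs k)) ((ws k).2)) atTop
        (𝓝 (ContinuousLinearMap.adjoint (fderiv ℝ (gradient g) xb) w.2)) :=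
      (isBoundedBilinearMap_apply.continuous.tendsto _).comp (hAcomp.prodMk_nhds hsnd)
    have hwt' : Tendsto ws' atTop
        (𝓝 (w.1 + ContinuousLinearMap.adjoint (fderiv ℝ (gradient g) xb) w.2, w.2)) :=
      (hfst.add happly).prodMk_nhds hsnd
    refine ⟨(w.1 + ContinuousLinearMap.adjoint (fderiv ℝ (gradient g) xb) w.2, w.2),
      ⟨xs, vs, ws', hmemf, hxs, hfxsf, hvsf, hws', hwt'⟩, ?_⟩
    simp
  · rintro ⟨w', hw', rfl⟩
    obtain ⟨xs, vs, ws', hmemf, hxs, hfxs, hvs, hws', hwt'⟩ := hw'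
    have hGxs : Tendsto (fun k => gradient g (xs k)) atTop (𝓝 (gradient g xb)) :=
      (hGc.tendsto xb).comp hxs
    set vsh : ℕ → En n := fun k => vs k + gradient g (xs k) with hvshdef
    set ws : ℕ → En n × En n := fun k =>
      ((ws' k).1 - ContinuousLinearMap.adjoint (fderiv ℝ (gradient g) (xs k)) ((ws' k).2),
        (ws' k).2) with hwsdef
    have hmem : ∀ k, vsh k ∈ LSubdiff (fun y => f y + ((g y : ℝ) : EReal)) (xs k) :=
      fun k => lsubdiff_add (hmemf k) hg
    have hfh : Tendsto (fun k => f (xs k) + ((g (xs k) : ℝ) : EReal)) atTop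
        (𝓝 (f xb + ((g xb : ℝ) : EReal))) :=
      tendsto_add_ereal_real hfxs ((hg.continuous.tendsto xb).comp hxs)
    have hvsh : Tendsto vsh atTop (𝓝 (xbs + gradient g xb)) := hvs.add hGxs
    have hwsmem : ∀ k, ws k ∈ AttRegNormal (fun y => f y + ((g y : ℝ) : EReal))
        (xs k) (vsh k) := by
      intro k
      refine (attRegNormal_add_iff hg).mpr ?_
      simpa [hwsdef, sub_add_cancel] using hws' k
    have hfst : Tendsto (fun k => (ws' k).1) atTop (𝓝 w'.1) :=
      (continuous_fst.tendsto w').comp hwt'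
    have hsnd : Tendsto (fun k => (ws' k).2) atTop (𝓝 w'.2) :=
      (continuous_snd.tendsto w').comp hwt'
    have hAcomp : Tendsto (fun k =>
        ContinuousLinearMap.adjoint (fderiv ℝ (gradient g) (xs k))) atTop
        (𝓝 (ContinuousLinearMap.adjoint (fderiv ℝ (gradient g) xb))) :=
      (hAc.tendsto xb).comp hxs
    have happly : Tendsto (fun k =>
        ContinuousLinearMap.adjoint (fderiv ℝ (gradient g) (xs k)) ((ws' k).2)) atTop
        (𝓝 (ContinuousLinearMap.adjoint (fderiv ℝ (gradient g) xb) w'.2)) :=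
      (isBoundedBilinearMap_apply.continuous.tendsto _).comp (hAcomp.prodMk_nhds hsnd)
    have hwst : Tendsto ws atTop
        (𝓝 (w'.1 - ContinuousLinearMap.adjoint (fderiv ℝ (gradient g) xb) w'.2, w'.2)) :=
      (hfst.sub happly).prodMk_nhds hsnd
    exact ⟨xs, vsh, ws, hmem, hxs, hfh, hvsh, hwsmem, hwst⟩
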